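/- Let a < b be real numbers and let D = [a,b]. Let B(D) be the ring of all bounded functions f : D → ℝ with pointwise operations. Then the maximal spectrum Specm(B(D)), with the Zariski topology, is Hausdorff and totally disconnected. -/

import Mathlib

/-- The ring of all bounded real-valued functions on a type `D`, a subring of the
product ring `D → ℝ` with pointwise operations. -/
def boundedFunctions (D : Type*) : Subring (D → ℝ) where
  carrier := {f | ∃ C, ∀ x, |f x| ≤ C}
  add_mem' := by
    rintro f g ⟨Cf, hCf⟩ ⟨Cg, hCg⟩
    exact ⟨Cf + Cg, fun x => (abs_add_le _ _).trans (add_le_add (hCf x) (hCg x))⟩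
  mul_mem' := by
    rintro f g ⟨Cf, hCf⟩ ⟨Cg, hCg⟩
    refine ⟨max Cf 0 * max Cg 0, fun x => ?_⟩
    rw [Pi.mul_apply, abs_mul]
    exact mul_le_mul ((hCf x).trans (le_max_left _ _)) ((hCg x).trans (le_max_left _ _))
      (abs_nonneg _) (le_max_right _ _)
  one_mem' := ⟨1, fun x => by simp⟩
  zero_mem' := ⟨0, fun x => by simp⟩
  neg_mem' := by
    rintro f ⟨Cf, hCf⟩
    exact ⟨Cf, fun x => by simpa using hCf x⟩

theorem totallySep (D : Type*) :
    TotallySeparatedSpace (MaximalSpectrum ↥(boundedFunctions D)) := by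
  constructor
  set R := ↥(boundedFunctions D)
  intro I _ J _ hIJ
  -- find f ∈ I \ J
  have hne : ¬ I.asIdeal ≤ J.asIdeal := by
    intro h
    exact hIJ (MaximalSpectrum.ext (I.isMaximal.eq_of_le J.isMaximal.ne_top h))
  obtain ⟨f, hfI, hfJ⟩ := SetLike.not_le_iff_exists.mp hne
  clear hne
  set F : R := f * f with hF
  have hFI : F ∈ I.asIdeal := Ideal.mul_mem_left _ _ hfI
  have hFJ : F ∉ J.asIdeal := fun h =>
    (J.isMaximal.isPrime.mem_or_mem h).elim hfJ hfJ
  have hFnn : ∀ x, 0 ≤ (F : D → ℝ) x := fun x => by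
    show 0 ≤ ((f : D → ℝ) * (f : D → ℝ)) x
    exact mul_self_nonneg _
  obtain ⟨g, u, huJ, hgu⟩ := J.isMaximal.exists_inv hFJ
  obtain ⟨C, hC⟩ := g.2
  set C' : ℝ := |C| + 1 with hC'
  have hC'pos : 0 < C' := by positivity
  have hgC' : ∀ x, |(g : D → ℝ) x| ≤ C' := fun x =>
    (hC x).trans (le_trans (le_abs_self C) (by linarith))
  set ε : ℝ := (2 * C')⁻¹ with hε
  have hεpos : 0 < ε := by positivity
  -- the idempotent e
  set e : R := ⟨fun x => if ε ≤ (F : D → ℝ) x then 1 else 0,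
    ⟨1, fun x => by dsimp only; split <;> simp⟩⟩ with he
  -- e ∈ I
  have heI : e ∈ I.asIdeal := by
    have h₁ : (⟨fun x => if ε ≤ (F : D → ℝ) x then ((F : D → ℝ) x)⁻¹ else 0,
        ⟨ε⁻¹, fun x => by
          dsimp only; split
          · rename_i hx
            rw [abs_of_nonneg (inv_nonneg.mpr (hFnn x))]
            exact inv_anti₀ hεpos hx
          · simp [le_of_lt (inv_pos.mpr hεpos)]⟩⟩ : R) * F = e := by
      apply Subtype.ext
      funext x
      show (if ε ≤ (F : D → ℝ) x then ((F : D → ℝ) x)⁻¹ else 0) * (F : D → ℝ) x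
          = if ε ≤ (F : D → ℝ) x then 1 else 0
      split
      · rename_i hx
        exact inv_mul_cancel₀ (ne_of_gt (lt_of_lt_of_le hεpos hx))
      · simp
    rw [← h₁]
    exact Ideal.mul_mem_left _ _ hFI
  -- 1 - e ∈ J
  have hu : ∀ x, ¬ ε ≤ (F : D → ℝ) x → (1:ℝ)/2 ≤ (u : D → ℝ) x := by
    intro x hx
    have hux : (u : D → ℝ) x = 1 - (g : D → ℝ) x * (F : D → ℝ) x := by
      have h' : u = 1 - g * F := by rw [← hgu]; abel
      have : (u : D → ℝ) = 1 - (g : D → ℝ) * (F : D → ℝ) := by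
        rw [h']
        simp
        rfl
      rw [this]; simp
    have hb : |(g : D → ℝ) x * (F : D → ℝ) x| ≤ C' * ε := by
      rw [abs_mul]
      exact mul_le_mul (hgC' x) (by rw [abs_of_nonneg (hFnn x)]; exact le_of_not_ge hx)
        (abs_nonneg _) (le_of_lt hC'pos)
    have : C' * ε = 1/2 := by
      field_simp [hε]
      rw [hε]; field_simp [hC'pos.ne']
    rw [hux]
    have := abs_le.mp (hb.trans_eq this)
    linarith [this.2]
  have h1eJ : (1 : R) - e ∈ J.asIdeal := by
    have h₂ : u * (⟨fun x => if ε ≤ (F : D → ℝ) x then 0 else ((u : D → ℝ) x)⁻¹,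
        ⟨2, fun x => by
          dsimp only; split
          · simp
          · rename_i hx
            have h2 := hu x hx
            rw [abs_of_nonneg (inv_nonneg.mpr (by linarith))]
            rw [inv_le_comm₀ (by linarith) (by norm_num)]
            linarith⟩⟩ : R) = 1 - e := by
      apply Subtype.ext
      funext x
      show (u : D → ℝ) x * (if ε ≤ (F : D → ℝ) x then 0 else ((u : D → ℝ) x)⁻¹)
          = 1 - (if ε ≤ (F : D → ℝ) x then 1 else 0)
      split
      · simp
      · rename_i hx
        have h2 := hu x hx
        rw [mul_inv_cancel₀ (by linarith)]
        norm_num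
    rw [← h₂]
    exact Ideal.mul_mem_right _ _ huJ
  -- e is idempotent: e * (1 - e) = 0
  have hid : e * ((1 : R) - e) = 0 := by
    apply Subtype.ext
    funext x
    show (if ε ≤ (F : D → ℝ) x then (1:ℝ) else 0) *
        (1 - (if ε ≤ (F : D → ℝ) x then (1:ℝ) else 0)) = 0
    split <;> ring
  -- build the clopen separation
  refine ⟨MaximalSpectrum.toPrimeSpectrum ⁻¹' (PrimeSpectrum.basicOpen ((1:R) - e) : Set (PrimeSpectrum R)),
    MaximalSpectrum.toPrimeSpectrum ⁻¹' (PrimeSpectrum.basicOpen e : Set (PrimeSpectrum R)),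
    (PrimeSpectrum.basicOpen _).2.preimage MaximalSpectrum.toPrimeSpectrum_continuous,
    (PrimeSpectrum.basicOpen _).2.preimage MaximalSpectrum.toPrimeSpectrum_continuous,
    ?_, ?_, ?_, ?_⟩
  · show (1:R) - e ∉ I.asIdeal
    intro h
    exact I.isMaximal.ne_top (I.asIdeal.eq_top_of_isUnit_mem
      (by simpa using I.asIdeal.add_mem heI h) (by simp))
  · show e ∉ J.asIdeal
    intro h
    exact J.isMaximal.ne_top (J.asIdeal.eq_top_of_isUnit_mem
      (by simpa using J.asIdeal.add_mem h h1eJ) (by simp))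
  · intro P _
    by_cases hP : e ∈ P.asIdeal
    · left
      show (1:R) - e ∉ P.asIdeal
      intro h
      exact P.isMaximal.ne_top (P.asIdeal.eq_top_of_isUnit_mem
        (by simpa using P.asIdeal.add_mem hP h) (by simp))
    · right; exact hP
  · rw [Set.disjoint_left]
    intro P hP1 hP2
    have h1 : (1:R) - e ∉ P.asIdeal := hP1
    have h2 : e ∉ P.asIdeal := hP2
    rcases P.isMaximal.isPrime.mem_or_mem (hid ▸ P.asIdeal.zero_mem) with h | h
    · exact h2 h
    · exact h1 h

/-- For `D = [a,b]` with `a < b`, the maximal spectrum of the ring `B(D)` of all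
bounded functions `D → ℝ`, with the Zariski topology, is Hausdorff and totally
disconnected. -/
theorem maximalSpectrum_boundedFunctions_t2_and_totallyDisconnected
    (a b : ℝ) (hab : a < b) :
    T2Space (MaximalSpectrum ↥(boundedFunctions ↥(Set.Icc a b))) ∧
      TotallyDisconnectedSpace (MaximalSpectrum ↥(boundedFunctions ↥(Set.Icc a b))) := by
  haveI := totallySep ↥(Set.Icc a b)
  exact ⟨inferInstance, inferInstance⟩
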